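/- Uniformity: For every QΛ type derivation π and every pair of sequences of occurrences O₁,…,Oₙ and P₁,…,Pₙ of the base type B in π, there is a unitary operator U on ℂ^(2^n) such that whenever (O₁,…,Oₙ,Q) →_π (P₁,…,Pₙ,R) in the token machine A_π, it holds that R = U(Q). -/

import Mathlib

namespace QL

/-- Types of the linear quantum λ-calculus QΛ: `A ::= B | A ⊸ B | A ⊗ B`. -/
inductive QType : Type
  | bit : QType
  | lolli : QType → QType → QType
  | tens : QType → QType → QType
  deriving DecidableEq

/-- A fixed finite set 𝒰 of unitary operators, each acting on `ℂ^(2^n)`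
(indexed by `Fin n → Bool`) for its arity `n`. -/
structure GateSet where
  card : ℕ
  arity : Fin card → ℕ
  arity_pos : ∀ g, 0 < arity g
  mat : ∀ g, Matrix (Fin (arity g) → Bool) (Fin (arity g) → Bool) ℂ
  unitary : ∀ g, mat g ∈ Matrix.unitaryGroup (Fin (arity g) → Bool) ℂ

/-- Terms of QΛ: variables, labelled bit constants `|b⟩ₙ`, constants `U` for the
unitary operators of the gate set, tensor pairs, applications and (pattern) abstractions. -/
inductive Term (G : GateSet) : Type
  | var : ℕ → Term G
  | bit : Bool → ℕ → Term G
  | gate : Fin G.card → Term G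
  | tens : Term G → Term G → Term G
  | app : Term G → Term G → Term G
  | lam : ℕ → Term G → Term G
  | lamPair : ℕ → ℕ → Term G → Term G
  deriving DecidableEq

/-- `B^n`, the n-fold tensor `B ⊗ … ⊗ B` (right associated). -/
def nTens : ℕ → QType
  | 0 => QType.bit
  | 1 => QType.bit
  | n + 2 => QType.tens QType.bit (nTens (n + 1))

/-- Linear environments: each variable is assigned a type at most once. -/
abbrev Env := ℕ → Option QType

def Env.empty : Env := fun _ => none
def Env.single (x : ℕ) (A : QType) : Env := fun y => if y = x then some A else none
def Env.updt (Γ : Env) (x : ℕ) (A : QType) : Env := fun y => if y = x then some A else Γ y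
/-- Two environments assign types to disjoint sets of variables. -/
def Env.Disj (Γ Δ : Env) : Prop := ∀ x, Γ x = none ∨ Δ x = none
def Env.union (Γ Δ : Env) : Env := fun x =>
  match Γ x with
  | some A => some A
  | none => Δ x

/-- Type derivations of QΛ (Fig. 1): `Deriv G Γ M A` is the type of derivations
of the judgement `Γ ⊢ M : A`.  Contexts are treated multiplicatively. -/
inductive Deriv (G : GateSet) : Env → Term G → QType → Type
  | ax (x : ℕ) (A : QType) : Deriv G (Env.single x A) (.var x) A
  | bit (b : Bool) (ℓ : ℕ) : Deriv G Env.empty (.bit b ℓ) .bit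
  | gate (g : Fin G.card) :
      Deriv G Env.empty (.gate g) (.lolli (nTens (G.arity g)) (nTens (G.arity g)))
  | lam {Γ : Env} {x : ℕ} {A B : QType} {M : Term G} (hx : Γ x = none)
      (d : Deriv G (Γ.updt x A) M B) : Deriv G Γ (.lam x M) (.lolli A B)
  | lamPair {Γ : Env} {x y : ℕ} {A B C : QType} {M : Term G}
      (hxy : x ≠ y) (hx : Γ x = none) (hy : Γ y = none)
      (d : Deriv G ((Γ.updt x A).updt y B) M C) :
      Deriv G Γ (.lamPair x y M) (.lolli (.tens A B) C)
  | app {Γ Δ : Env} {M N : Term G} {A B : QType} (h : Env.Disj Γ Δ)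
      (d : Deriv G Γ M (.lolli A B)) (e : Deriv G Δ N A) :
      Deriv G (Γ.union Δ) (.app M N) B
  | tens {Γ Δ : Env} {M N : Term G} {A B : QType} (h : Env.Disj Γ Δ)
      (d : Deriv G Γ M A) (e : Deriv G Δ N B) :
      Deriv G (Γ.union Δ) (.tens M N) (.tens A B)

/-! ## The token machine IAM(QΛ) -/

/-- A position in a judgement: either (the type of) a context variable, or the goal type. -/
inductive Slot : Type
  | ctx : ℕ → Slot
  | goal : Slot
  deriving DecidableEq

/-- An occurrence of the base type `B` in a type derivation: a path in the
derivation tree (choosing premises), a slot in the judgement reached, and a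
path inside the type occurrence sitting there (`false` = left, `true` = right). -/
abbrev Occ := List ℕ × Slot × List Bool

def liftOcc (i : ℕ) (o : Occ) : Occ := (i :: o.1, o.2.1, o.2.2)

/-- Polarity of an occurrence of `B` inside a type: `some true` for positive,
`some false` for negative, `none` if the path does not lead to a `B`. -/
def occPol : QType → List Bool → Option Bool
  | .bit, [] => some true
  | .lolli A _, false :: q => (occPol A q).map not
  | .lolli _ B, true :: q => occPol B q
  | .tens A _, false :: q => occPol A q
  | .tens _ B, true :: q => occPol B q
  | _, _ => none

/-- The path of the `k`-th `B` inside `B^m = nTens m`. -/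
def tensPath : ℕ → ℕ → List Bool
  | 0, _ => []
  | 1, _ => []
  | _ + 2, 0 => [false]
  | m + 2, k + 1 => true :: tensPath (m + 1) k

/-- The single-token transitions of the machine `A_π` (Fig. 3), moving one
occurrence of `B` through the typing rules of the derivation, in the direction
prescribed by its polarity.  (The synchronous moves at unitary axioms are part
of `Step` below.) -/
inductive Edge (G : GateSet) :
    ∀ {Γ : Env} {M : Term G} {A : QType}, Deriv G Γ M A → Occ → Occ → Prop
  -- (a_v)
  | ax_ctx {x : ℕ} {A : QType} {q : List Bool} (h : occPol A q = some true) :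
      Edge G (.ax x A) ([], .ctx x, q) ([], .goal, q)
  | ax_goal {x : ℕ} {A : QType} {q : List Bool} (h : occPol A q = some false) :
      Edge G (.ax x A) ([], .goal, q) ([], .ctx x, q)
  -- (I⊸¹)
  | lam_var_out {Γ : Env} {x : ℕ} {A B : QType} {M : Term G} (hx : Γ x = none)
      (d : Deriv G (Γ.updt x A) M B) {q : List Bool} (h : occPol A q = some false) :
      Edge G (.lam hx d) ([0], .ctx x, q) ([], .goal, false :: q)
  | lam_var_in {Γ : Env} {x : ℕ} {A B : QType} {M : Term G} (hx : Γ x = none)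
      (d : Deriv G (Γ.updt x A) M B) {q : List Bool} (h : occPol A q = some true) :
      Edge G (.lam hx d) ([], .goal, false :: q) ([0], .ctx x, q)
  | lam_body_out {Γ : Env} {x : ℕ} {A B : QType} {M : Term G} (hx : Γ x = none)
      (d : Deriv G (Γ.updt x A) M B) {q : List Bool} (h : occPol B q = some true) :
      Edge G (.lam hx d) ([0], .goal, q) ([], .goal, true :: q)
  | lam_body_in {Γ : Env} {x : ℕ} {A B : QType} {M : Term G} (hx : Γ x = none)
      (d : Deriv G (Γ.updt x A) M B) {q : List Bool} (h : occPol B q = some false) :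
      Edge G (.lam hx d) ([], .goal, true :: q) ([0], .goal, q)
  | lam_ctx_up {Γ : Env} {x : ℕ} {A B : QType} {M : Term G} (hx : Γ x = none)
      (d : Deriv G (Γ.updt x A) M B) {v : ℕ} {C : QType} {q : List Bool}
      (hv : Γ v = some C) (h : occPol C q = some true) :
      Edge G (.lam hx d) ([], .ctx v, q) ([0], .ctx v, q)
  | lam_ctx_down {Γ : Env} {x : ℕ} {A B : QType} {M : Term G} (hx : Γ x = none)
      (d : Deriv G (Γ.updt x A) M B) {v : ℕ} {C : QType} {q : List Bool}
      (hv : Γ v = some C) (h : occPol C q = some false) :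
      Edge G (.lam hx d) ([0], .ctx v, q) ([], .ctx v, q)
  -- (I⊸²)
  | lamPair_x_out {Γ : Env} {x y : ℕ} {A B C : QType} {M : Term G}
      (hxy : x ≠ y) (hx : Γ x = none) (hy : Γ y = none)
      (d : Deriv G ((Γ.updt x A).updt y B) M C) {q : List Bool}
      (h : occPol A q = some false) :
      Edge G (.lamPair hxy hx hy d) ([0], .ctx x, q) ([], .goal, false :: false :: q)
  | lamPair_x_in {Γ : Env} {x y : ℕ} {A B C : QType} {M : Term G}
      (hxy : x ≠ y) (hx : Γ x = none) (hy : Γ y = none)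
      (d : Deriv G ((Γ.updt x A).updt y B) M C) {q : List Bool}
      (h : occPol A q = some true) :
      Edge G (.lamPair hxy hx hy d) ([], .goal, false :: false :: q) ([0], .ctx x, q)
  | lamPair_y_out {Γ : Env} {x y : ℕ} {A B C : QType} {M : Term G}
      (hxy : x ≠ y) (hx : Γ x = none) (hy : Γ y = none)
      (d : Deriv G ((Γ.updt x A).updt y B) M C) {q : List Bool}
      (h : occPol B q = some false) :
      Edge G (.lamPair hxy hx hy d) ([0], .ctx y, q) ([], .goal, false :: true :: q)
  | lamPair_y_in {Γ : Env} {x y : ℕ} {A B C : QType} {M : Term G}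
      (hxy : x ≠ y) (hx : Γ x = none) (hy : Γ y = none)
      (d : Deriv G ((Γ.updt x A).updt y B) M C) {q : List Bool}
      (h : occPol B q = some true) :
      Edge G (.lamPair hxy hx hy d) ([], .goal, false :: true :: q) ([0], .ctx y, q)
  | lamPair_body_out {Γ : Env} {x y : ℕ} {A B C : QType} {M : Term G}
      (hxy : x ≠ y) (hx : Γ x = none) (hy : Γ y = none)
      (d : Deriv G ((Γ.updt x A).updt y B) M C) {q : List Bool}
      (h : occPol C q = some true) :
      Edge G (.lamPair hxy hx hy d) ([0], .goal, q) ([], .goal, true :: q)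
  | lamPair_body_in {Γ : Env} {x y : ℕ} {A B C : QType} {M : Term G}
      (hxy : x ≠ y) (hx : Γ x = none) (hy : Γ y = none)
      (d : Deriv G ((Γ.updt x A).updt y B) M C) {q : List Bool}
      (h : occPol C q = some false) :
      Edge G (.lamPair hxy hx hy d) ([], .goal, true :: q) ([0], .goal, q)
  | lamPair_ctx_up {Γ : Env} {x y : ℕ} {A B C : QType} {M : Term G}
      (hxy : x ≠ y) (hx : Γ x = none) (hy : Γ y = none)
      (d : Deriv G ((Γ.updt x A).updt y B) M C) {v : ℕ} {D : QType} {q : List Bool}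
      (hv : Γ v = some D) (h : occPol D q = some true) :
      Edge G (.lamPair hxy hx hy d) ([], .ctx v, q) ([0], .ctx v, q)
  | lamPair_ctx_down {Γ : Env} {x y : ℕ} {A B C : QType} {M : Term G}
      (hxy : x ≠ y) (hx : Γ x = none) (hy : Γ y = none)
      (d : Deriv G ((Γ.updt x A).updt y B) M C) {v : ℕ} {D : QType} {q : List Bool}
      (hv : Γ v = some D) (h : occPol D q = some false) :
      Edge G (.lamPair hxy hx hy d) ([0], .ctx v, q) ([], .ctx v, q)
  -- (E⊸)
  | app_arg_toFun {Γ Δ : Env} {M N : Term G} {A B : QType} (h : Env.Disj Γ Δ)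
      (d : Deriv G Γ M (.lolli A B)) (e : Deriv G Δ N A) {q : List Bool}
      (hq : occPol A q = some true) :
      Edge G (.app h d e) ([1], .goal, q) ([0], .goal, false :: q)
  | app_arg_toArg {Γ Δ : Env} {M N : Term G} {A B : QType} (h : Env.Disj Γ Δ)
      (d : Deriv G Γ M (.lolli A B)) (e : Deriv G Δ N A) {q : List Bool}
      (hq : occPol A q = some false) :
      Edge G (.app h d e) ([0], .goal, false :: q) ([1], .goal, q)
  | app_res_down {Γ Δ : Env} {M N : Term G} {A B : QType} (h : Env.Disj Γ Δ)
      (d : Deriv G Γ M (.lolli A B)) (e : Deriv G Δ N A) {q : List Bool}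
      (hq : occPol B q = some true) :
      Edge G (.app h d e) ([0], .goal, true :: q) ([], .goal, q)
  | app_res_up {Γ Δ : Env} {M N : Term G} {A B : QType} (h : Env.Disj Γ Δ)
      (d : Deriv G Γ M (.lolli A B)) (e : Deriv G Δ N A) {q : List Bool}
      (hq : occPol B q = some false) :
      Edge G (.app h d e) ([], .goal, q) ([0], .goal, true :: q)
  | app_ctxL_up {Γ Δ : Env} {M N : Term G} {A B : QType} (h : Env.Disj Γ Δ)
      (d : Deriv G Γ M (.lolli A B)) (e : Deriv G Δ N A) {v : ℕ} {C : QType}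
      {q : List Bool} (hv : Γ v = some C) (hq : occPol C q = some true) :
      Edge G (.app h d e) ([], .ctx v, q) ([0], .ctx v, q)
  | app_ctxL_down {Γ Δ : Env} {M N : Term G} {A B : QType} (h : Env.Disj Γ Δ)
      (d : Deriv G Γ M (.lolli A B)) (e : Deriv G Δ N A) {v : ℕ} {C : QType}
      {q : List Bool} (hv : Γ v = some C) (hq : occPol C q = some false) :
      Edge G (.app h d e) ([0], .ctx v, q) ([], .ctx v, q)
  | app_ctxR_up {Γ Δ : Env} {M N : Term G} {A B : QType} (h : Env.Disj Γ Δ)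
      (d : Deriv G Γ M (.lolli A B)) (e : Deriv G Δ N A) {v : ℕ} {C : QType}
      {q : List Bool} (hv : Δ v = some C) (hq : occPol C q = some true) :
      Edge G (.app h d e) ([], .ctx v, q) ([1], .ctx v, q)
  | app_ctxR_down {Γ Δ : Env} {M N : Term G} {A B : QType} (h : Env.Disj Γ Δ)
      (d : Deriv G Γ M (.lolli A B)) (e : Deriv G Δ N A) {v : ℕ} {C : QType}
      {q : List Bool} (hv : Δ v = some C) (hq : occPol C q = some false) :
      Edge G (.app h d e) ([1], .ctx v, q) ([], .ctx v, q)
  -- (I⊗)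
  | tens_left_in {Γ Δ : Env} {M N : Term G} {A B : QType} (h : Env.Disj Γ Δ)
      (d : Deriv G Γ M A) (e : Deriv G Δ N B) {q : List Bool}
      (hq : occPol A q = some false) :
      Edge G (.tens h d e) ([], .goal, false :: q) ([0], .goal, q)
  | tens_left_out {Γ Δ : Env} {M N : Term G} {A B : QType} (h : Env.Disj Γ Δ)
      (d : Deriv G Γ M A) (e : Deriv G Δ N B) {q : List Bool}
      (hq : occPol A q = some true) :
      Edge G (.tens h d e) ([0], .goal, q) ([], .goal, false :: q)
  | tens_right_in {Γ Δ : Env} {M N : Term G} {A B : QType} (h : Env.Disj Γ Δ)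
      (d : Deriv G Γ M A) (e : Deriv G Δ N B) {q : List Bool}
      (hq : occPol B q = some false) :
      Edge G (.tens h d e) ([], .goal, true :: q) ([1], .goal, q)
  | tens_right_out {Γ Δ : Env} {M N : Term G} {A B : QType} (h : Env.Disj Γ Δ)
      (d : Deriv G Γ M A) (e : Deriv G Δ N B) {q : List Bool}
      (hq : occPol B q = some true) :
      Edge G (.tens h d e) ([1], .goal, q) ([], .goal, true :: q)
  | tens_ctxL_up {Γ Δ : Env} {M N : Term G} {A B : QType} (h : Env.Disj Γ Δ)
      (d : Deriv G Γ M A) (e : Deriv G Δ N B) {v : ℕ} {C : QType} {q : List Bool}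
      (hv : Γ v = some C) (hq : occPol C q = some true) :
      Edge G (.tens h d e) ([], .ctx v, q) ([0], .ctx v, q)
  | tens_ctxL_down {Γ Δ : Env} {M N : Term G} {A B : QType} (h : Env.Disj Γ Δ)
      (d : Deriv G Γ M A) (e : Deriv G Δ N B) {v : ℕ} {C : QType} {q : List Bool}
      (hv : Γ v = some C) (hq : occPol C q = some false) :
      Edge G (.tens h d e) ([0], .ctx v, q) ([], .ctx v, q)
  | tens_ctxR_up {Γ Δ : Env} {M N : Term G} {A B : QType} (h : Env.Disj Γ Δ)
      (d : Deriv G Γ M A) (e : Deriv G Δ N B) {v : ℕ} {C : QType} {q : List Bool}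
      (hv : Δ v = some C) (hq : occPol C q = some true) :
      Edge G (.tens h d e) ([], .ctx v, q) ([1], .ctx v, q)
  | tens_ctxR_down {Γ Δ : Env} {M N : Term G} {A B : QType} (h : Env.Disj Γ Δ)
      (d : Deriv G Γ M A) (e : Deriv G Δ N B) {v : ℕ} {C : QType} {q : List Bool}
      (hv : Δ v = some C) (hq : occPol C q = some false) :
      Edge G (.tens h d e) ([1], .ctx v, q) ([], .ctx v, q)
  -- lifting of transitions of subderivations
  | lift_lam {Γ : Env} {x : ℕ} {A B : QType} {M : Term G} (hx : Γ x = none)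
      (d : Deriv G (Γ.updt x A) M B) {o o' : Occ} :
      Edge G d o o' → Edge G (.lam hx d) (liftOcc 0 o) (liftOcc 0 o')
  | lift_lamPair {Γ : Env} {x y : ℕ} {A B C : QType} {M : Term G}
      (hxy : x ≠ y) (hx : Γ x = none) (hy : Γ y = none)
      (d : Deriv G ((Γ.updt x A).updt y B) M C) {o o' : Occ} :
      Edge G d o o' → Edge G (.lamPair hxy hx hy d) (liftOcc 0 o) (liftOcc 0 o')
  | lift_app_left {Γ Δ : Env} {M N : Term G} {A B : QType} (h : Env.Disj Γ Δ)
      (d : Deriv G Γ M (.lolli A B)) (e : Deriv G Δ N A) {o o' : Occ} :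
      Edge G d o o' → Edge G (.app h d e) (liftOcc 0 o) (liftOcc 0 o')
  | lift_app_right {Γ Δ : Env} {M N : Term G} {A B : QType} (h : Env.Disj Γ Δ)
      (d : Deriv G Γ M (.lolli A B)) (e : Deriv G Δ N A) {o o' : Occ} :
      Edge G e o o' → Edge G (.app h d e) (liftOcc 1 o) (liftOcc 1 o')
  | lift_tens_left {Γ Δ : Env} {M N : Term G} {A B : QType} (h : Env.Disj Γ Δ)
      (d : Deriv G Γ M A) (e : Deriv G Δ N B) {o o' : Occ} :
      Edge G d o o' → Edge G (.tens h d e) (liftOcc 0 o) (liftOcc 0 o')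
  | lift_tens_right {Γ Δ : Env} {M N : Term G} {A B : QType} (h : Env.Disj Γ Δ)
      (d : Deriv G Γ M A) (e : Deriv G Δ N B) {o o' : Occ} :
      Edge G e o o' → Edge G (.tens h d e) (liftOcc 1 o) (liftOcc 1 o')

/-- `GateAt G d p g` holds when the axiom `(a_U)` for the unitary `g` occurs
at path `p` in the derivation `d`. -/
inductive GateAt (G : GateSet) :
    ∀ {Γ : Env} {M : Term G} {A : QType}, Deriv G Γ M A → List ℕ → Fin G.card → Prop
  | here (g : Fin G.card) : GateAt G (.gate g) [] g
  | in_lam {Γ : Env} {x : ℕ} {A B : QType} {M : Term G} (hx : Γ x = none)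
      (d : Deriv G (Γ.updt x A) M B) {p : List ℕ} {g : Fin G.card} :
      GateAt G d p g → GateAt G (.lam hx d) (0 :: p) g
  | in_lamPair {Γ : Env} {x y : ℕ} {A B C : QType} {M : Term G}
      (hxy : x ≠ y) (hx : Γ x = none) (hy : Γ y = none)
      (d : Deriv G ((Γ.updt x A).updt y B) M C) {p : List ℕ} {g : Fin G.card} :
      GateAt G d p g → GateAt G (.lamPair hxy hx hy d) (0 :: p) g
  | in_app_left {Γ Δ : Env} {M N : Term G} {A B : QType} (h : Env.Disj Γ Δ)
      (d : Deriv G Γ M (.lolli A B)) (e : Deriv G Δ N A) {p : List ℕ} {g : Fin G.card} :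
      GateAt G d p g → GateAt G (.app h d e) (0 :: p) g
  | in_app_right {Γ Δ : Env} {M N : Term G} {A B : QType} (h : Env.Disj Γ Δ)
      (d : Deriv G Γ M (.lolli A B)) (e : Deriv G Δ N A) {p : List ℕ} {g : Fin G.card} :
      GateAt G e p g → GateAt G (.app h d e) (1 :: p) g
  | in_tens_left {Γ Δ : Env} {M N : Term G} {A B : QType} (h : Env.Disj Γ Δ)
      (d : Deriv G Γ M A) (e : Deriv G Δ N B) {p : List ℕ} {g : Fin G.card} :
      GateAt G d p g → GateAt G (.tens h d e) (0 :: p) g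
  | in_tens_right {Γ Δ : Env} {M N : Term G} {A B : QType} (h : Env.Disj Γ Δ)
      (d : Deriv G Γ M A) (e : Deriv G Δ N B) {p : List ℕ} {g : Fin G.card} :
      GateAt G e p g → GateAt G (.tens h d e) (1 :: p) g

/-- A quantum register on `n` quantum bits: a vector in `ℂ^(2^n)`
(with its Euclidean/L² norm). -/
abbrev Reg (n : ℕ) : Type := EuclideanSpace ℂ (Fin n → Bool)

/-- `U^{i₁,…,iₘ}`: the operator on `n` qubits acting like `U = mat g` on the
qubits at the (distinct) positions `ι 0, …, ι (m-1)` and as the identity elsewhere. -/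
def liftMat (G : GateSet) (g : Fin G.card) {n : ℕ} (ι : Fin (G.arity g) → Fin n) :
    Matrix (Fin n → Bool) (Fin n → Bool) ℂ :=
  fun f f' =>
    if ∀ j, (∀ k, ι k ≠ j) → f j = f' j then G.mat g (f ∘ ι) (f' ∘ ι) else 0

/-- States of the token machine: a number `n` of tokens, the occurrences at
which the `n` tokens currently sit, and a quantum register on `n` qubits. -/
def TMState : Type := Σ n : ℕ, (Fin n → Occ) × Reg n

/-- A state of `A_π` has a normalised quantum register. -/
def Normalised (s : TMState) : Prop := ‖s.2.2‖ = 1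

/-- The transition relation `→_π` of the machine `A_π`: either a single token
moves along an `Edge`, or the `m` tokens sitting at the argument occurrences of
a unitary axiom of arity `m` synchronously move to its result occurrences while
the operator is applied to the register. -/
inductive Step (G : GateSet) {Γ : Env} {M : Term G} {A : QType} (d : Deriv G Γ M A) :
    TMState → TMState → Prop
  | single {n : ℕ} (toks : Fin n → Occ) (Q : Reg n) (i : Fin n) (o' : Occ)
      (h : Edge G d (toks i) o') :
      Step G d ⟨n, toks, Q⟩ ⟨n, Function.update toks i o', Q⟩
  | sync {n : ℕ} (toks toks' : Fin n → Occ) (Q : Reg n) {p : List ℕ} {g : Fin G.card}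
      (hg : GateAt G d p g) (ι : Fin (G.arity g) → Fin n) (hinj : Function.Injective ι)
      (harg : ∀ k, toks (ι k) = (p, .goal, false :: tensPath (G.arity g) (k : ℕ)))
      (hres : ∀ k, toks' (ι k) = (p, .goal, true :: tensPath (G.arity g) (k : ℕ)))
      (hoth : ∀ j, (∀ k, ι k ≠ j) → toks' j = toks j) :
      Step G d ⟨n, toks, Q⟩ ⟨n, toks', (WithLp.toLp 2 ((liftMat G g ι).mulVec Q) : Reg n)⟩


section AuxLemmas

variable {G : GateSet}

lemma tensPath_inj : ∀ (m k k' : ℕ), k < m → k' < m →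
    tensPath m k = tensPath m k' → k = k'
  | 0, _, _, hk, _, _ => absurd hk (Nat.not_lt_zero _)
  | 1, 0, 0, _, _, _ => rfl
  | 1, 0, _+1, _, hk', _ => by omega
  | 1, _+1, _, hk, _, _ => by omega
  | _+2, 0, 0, _, _, _ => rfl
  | _+2, 0, _+1, _, _, h => by simp [tensPath] at h
  | _+2, _+1, 0, _, _, h => by simp [tensPath] at h
  | m+2, k+1, k'+1, hk, hk', h => by
      simp only [tensPath, List.cons.injEq, true_and] at h
      exact congrArg Nat.succ (tensPath_inj (m+1) k k' (by omega) (by omega) h)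

/-- The gate (if any) sitting at path `p` in the derivation `d`, computed
by recursion. -/
def gateAt? : ∀ {Γ : Env} {M : Term G} {A : QType},
    Deriv G Γ M A → List ℕ → Option (Fin G.card)
  | _, _, _, .ax _ _ => fun _ => none
  | _, _, _, .bit _ _ => fun _ => none
  | _, _, _, .gate g => fun p => match p with | [] => some g | _ => none
  | _, _, _, .lam _ d => fun p =>
      match p with | 0 :: p => gateAt? d p | _ => none
  | _, _, _, .lamPair _ _ _ d => fun p =>
      match p with | 0 :: p => gateAt? d p | _ => none
  | _, _, _, .app _ d e => fun p =>
      match p with | 0 :: p => gateAt? d p | 1 :: p => gateAt? e p | _ => none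
  | _, _, _, .tens _ d e => fun p =>
      match p with | 0 :: p => gateAt? d p | 1 :: p => gateAt? e p | _ => none

@[local simp] lemma gateAt?_ax (x : ℕ) (A : QType) (p : List ℕ) :
    gateAt? (G := G) (.ax x A) p = none := rfl
@[local simp] lemma gateAt?_bit (b : Bool) (ℓ : ℕ) (p : List ℕ) :
    gateAt? (G := G) (.bit b ℓ) p = none := rfl
@[local simp] lemma gateAt?_gate_nil (g : Fin G.card) :
    gateAt? (G := G) (.gate g) [] = some g := rfl
@[local simp] lemma gateAt?_lam {Γ : Env} {x : ℕ} {A B : QType} {M : Term G}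
    (hx : Γ x = none) (d : Deriv G (Γ.updt x A) M B) (p : List ℕ) :
    gateAt? (.lam hx d) (0 :: p) = gateAt? d p := rfl
@[local simp] lemma gateAt?_lamPair {Γ : Env} {x y : ℕ} {A B C : QType} {M : Term G}
    (hxy : x ≠ y) (hx : Γ x = none) (hy : Γ y = none)
    (d : Deriv G ((Γ.updt x A).updt y B) M C) (p : List ℕ) :
    gateAt? (.lamPair hxy hx hy d) (0 :: p) = gateAt? d p := rfl
@[local simp] lemma gateAt?_app_left {Γ Δ : Env} {M N : Term G} {A B : QType}
    (h : Env.Disj Γ Δ) (d : Deriv G Γ M (.lolli A B)) (e : Deriv G Δ N A) (p : List ℕ) :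
    gateAt? (.app h d e) (0 :: p) = gateAt? d p := rfl
@[local simp] lemma gateAt?_app_right {Γ Δ : Env} {M N : Term G} {A B : QType}
    (h : Env.Disj Γ Δ) (d : Deriv G Γ M (.lolli A B)) (e : Deriv G Δ N A) (p : List ℕ) :
    gateAt? (.app h d e) (1 :: p) = gateAt? e p := rfl
@[local simp] lemma gateAt?_tens_left {Γ Δ : Env} {M N : Term G} {A B : QType}
    (h : Env.Disj Γ Δ) (d : Deriv G Γ M A) (e : Deriv G Δ N B) (p : List ℕ) :
    gateAt? (.tens h d e) (0 :: p) = gateAt? d p := rfl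
@[local simp] lemma gateAt?_tens_right {Γ Δ : Env} {M N : Term G} {A B : QType}
    (h : Env.Disj Γ Δ) (d : Deriv G Γ M A) (e : Deriv G Δ N B) (p : List ℕ) :
    gateAt? (.tens h d e) (1 :: p) = gateAt? e p := rfl

lemma gateAt?_of {Γ : Env} {M : Term G} {A : QType} {d : Deriv G Γ M A}
    {p : List ℕ} {g : Fin G.card} (h : GateAt G d p g) :
    gateAt? d p = some g := by
  induction h <;> simp [*]

lemma gateAt_unique {Γ : Env} {M : Term G} {A : QType} {d : Deriv G Γ M A}
    {p : List ℕ} {g : Fin G.card} (h1 : GateAt G d p g) :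
    ∀ g', GateAt G d p g' → g = g' := by
  intro g' h2
  have e1 := gateAt?_of h1
  have e2 := gateAt?_of h2
  rw [e1] at e2
  exact Option.some.inj e2

lemma no_edge_at_gate' {Γ : Env} {M : Term G} {A : QType} {d : Deriv G Γ M A}
    {o o' : Occ} (he : Edge G d o o') :
    ∀ (p : List ℕ) (g : Fin G.card), gateAt? d p = some g →
      o.1 = p → o'.1 = p → False := by
  induction he <;> intro p g0 hg h1 h2 <;> subst h1 <;>
    first
      | exact Option.noConfusion hg
      | (simp at hg; done)
      | (rename_i ih
         simp only [liftOcc, gateAt?_lam, gateAt?_lamPair, gateAt?_app_left,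
           gateAt?_app_right, gateAt?_tens_left, gateAt?_tens_right,
           List.cons.injEq, true_and] at hg h2
         exact ih _ g0 hg rfl h2)
      | simp [liftOcc] at h2

lemma no_edge_at_gate {Γ : Env} {M : Term G} {A : QType} {d : Deriv G Γ M A}
    {p : List ℕ} {g : Fin G.card} (h1 : GateAt G d p g) :
    ∀ o o' : Occ, Edge G d o o' → o.1 = p → o'.1 = p → False :=
  fun _ _ he => no_edge_at_gate' he p g (gateAt?_of h1)

open Classical in
/-- Decomposition of `Fin n → Bool` along an injection `ι : Fin m → Fin n`. -/
noncomputable def splitEquiv {m n : ℕ} (ι : Fin m → Fin n) (hinj : Function.Injective ι) :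
    (Fin n → Bool) ≃ (Fin m → Bool) × ({j : Fin n // ∀ k, ι k ≠ j} → Bool) where
  toFun h := (h ∘ ι, fun j => h j.1)
  invFun p j := if hj : ∃ k, ι k = j then p.1 hj.choose
                else p.2 ⟨j, fun k hk => hj ⟨k, hk⟩⟩
  left_inv h := by
    funext j
    by_cases hj : ∃ k, ι k = j
    · simp only [dif_pos hj]; exact congrArg h hj.choose_spec
    · simp only [dif_neg hj]
  right_inv p := by
    obtain ⟨u, v⟩ := p
    simp only [Prod.mk.injEq]
    constructor
    · funext k
      have hj : ∃ k', ι k' = ι k := ⟨k, rfl⟩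
      simp only [Function.comp_apply, dif_pos hj]
      exact congrArg u (hinj hj.choose_spec)
    · funext j
      have hj : ¬ ∃ k, ι k = j.1 := fun ⟨k, hk⟩ => j.2 k hk
      simp only [dif_neg hj]

lemma liftMat_mem_unitaryGroup (G : GateSet) (g : Fin G.card) {n : ℕ}
    (ι : Fin (G.arity g) → Fin n) (hinj : Function.Injective ι) :
    liftMat G g ι ∈ Matrix.unitaryGroup (Fin n → Bool) ℂ := by
  classical
  rw [Matrix.mem_unitaryGroup_iff']
  have hM : star (G.mat g) * G.mat g = 1 := Matrix.mem_unitaryGroup_iff'.mp (G.unitary g)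
  ext f f'
  set E := splitEquiv ι hinj with hE
  have hcomp : ∀ u v, (E.symm (u, v)) ∘ ι = u := by
    intro u v
    exact congrArg Prod.fst (E.apply_symm_apply (u, v))
  have hv : ∀ u v (j : {j : Fin n // ∀ k, ι k ≠ j}), E.symm (u, v) j.1 = v j := by
    intro u v j
    exact congrFun (congrArg Prod.snd (E.apply_symm_apply (u, v))) j
  have hcond : ∀ u v (x : Fin n → Bool),
      (∀ j, (∀ k, ι k ≠ j) → E.symm (u, v) j = x j) ↔ v = (fun j => x j.1) := by
    intro u v x
    constructor
    · intro h; funext j; rw [← hv u v j]; exact h j.1 j.2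
    · intro h j hj
      have h1 := hv u v ⟨j, hj⟩
      rw [h1, h]
  have hsum := Fintype.sum_equiv E.symm
      (fun pr : (Fin (G.arity g) → Bool) × ({j : Fin n // ∀ k, ι k ≠ j} → Bool) =>
        star (liftMat G g ι) f (E.symm pr) * liftMat G g ι (E.symm pr) f')
      (fun h => star (liftMat G g ι) f h * liftMat G g ι h f')
      (fun pr => rfl)
  rw [Matrix.mul_apply, ← hsum, Fintype.sum_prod_type]
  have hterm : ∀ u v,
      star (liftMat G g ι) f (E.symm (u, v)) * liftMat G g ι (E.symm (u, v)) f' =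
      (if v = (fun j => f j.1) then star (G.mat g u (f ∘ ι)) else 0) *
      (if v = (fun j => f' j.1) then G.mat g u (f' ∘ ι) else 0) := by
    intro u v
    rw [Matrix.star_apply]
    show star (liftMat G g ι (E.symm (u, v)) f) * liftMat G g ι (E.symm (u, v)) f' = _
    unfold liftMat
    rw [hcomp u v]
    simp only [hcond u v]
    split_ifs <;> simp
  simp only [hterm]
  have hinner : ∀ u : Fin (G.arity g) → Bool,
      ∑ v : ({j : Fin n // ∀ k, ι k ≠ j} → Bool),
        (if v = (fun j => f j.1) then star (G.mat g u (f ∘ ι)) else 0) *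
        (if v = (fun j => f' j.1) then G.mat g u (f' ∘ ι) else 0) =
      if (fun (j : {j : Fin n // ∀ k, ι k ≠ j}) => f j.1) = (fun j => f' j.1) then
        star (G.mat g u (f ∘ ι)) * G.mat g u (f' ∘ ι) else 0 := by
    intro u
    rw [Finset.sum_eq_single (fun j => f j.1)]
    · by_cases h : (fun (j : {j : Fin n // ∀ k, ι k ≠ j}) => f j.1) = fun j => f' j.1 <;>
        simp [h]
    · intro v _ hvne
      rw [if_neg hvne, zero_mul]
    · intro habs; exact absurd (Finset.mem_univ _) habs
  simp only [hinner]
  have hsplit : f = f' ↔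
      ((fun (j : {j : Fin n // ∀ k, ι k ≠ j}) => f j.1) = fun j => f' j.1) ∧
        f ∘ ι = f' ∘ ι := by
    constructor
    · rintro rfl; exact ⟨rfl, rfl⟩
    · rintro ⟨h1, h2⟩
      funext j
      by_cases hj : ∃ k, ι k = j
      · obtain ⟨k, rfl⟩ := hj; exact congrFun h2 k
      · exact congrFun h1 ⟨j, fun k hk => hj ⟨k, hk⟩⟩
  by_cases hC : (fun (j : {j : Fin n // ∀ k, ι k ≠ j}) => f j.1) = fun j => f' j.1
  · simp only [if_pos hC]
    have h1 : ∑ u, star (G.mat g u (f ∘ ι)) * G.mat g u (f' ∘ ι) =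
        (1 : Matrix (Fin (G.arity g) → Bool) (Fin (G.arity g) → Bool) ℂ) (f ∘ ι) (f' ∘ ι) := by
      rw [← hM, Matrix.mul_apply]
      simp [Matrix.star_apply]
    rw [h1]
    by_cases h2 : f ∘ ι = f' ∘ ι <;>
      simp [Matrix.one_apply, hsplit, hC, h2]
  · simp only [if_neg hC, Finset.sum_const_zero]
    have hfne : f ≠ f' := fun hff => hC (by rw [hff])
    rw [Matrix.one_apply_ne hfne]

lemma step_inv {Γ : Env} {M : Term G} {A : QType} {d : Deriv G Γ M A}
    {n : ℕ} {O P : Fin n → Occ} {Q R : Reg n}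
    (h : Step G d ⟨n, O, Q⟩ ⟨n, P, R⟩) :
    (R = Q ∧ ∃ i o', Edge G d (O i) o' ∧ P = Function.update O i o') ∨
    (∃ (p : List ℕ) (g : Fin G.card) (ι : Fin (G.arity g) → Fin n),
      GateAt G d p g ∧ Function.Injective ι ∧
      (∀ k, O (ι k) = (p, .goal, false :: tensPath (G.arity g) (k : ℕ))) ∧
      (∀ k, P (ι k) = (p, .goal, true :: tensPath (G.arity g) (k : ℕ))) ∧
      (∀ j, (∀ k, ι k ≠ j) → P j = O j) ∧
      R = (WithLp.toLp 2 ((liftMat G g ι).mulVec Q) : Reg n)) := by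
  cases h with
  | single toks Q i o' he => exact Or.inl ⟨rfl, i, o', he, rfl⟩
  | sync toks toks' Q hg ι hinj harg hres hoth =>
      exact Or.inr ⟨_, _, ι, hg, hinj, harg, hres, hoth, rfl⟩

end AuxLemmas

/-- **Uniformity**: for every derivation `π` and occurrences `O₁,…,Oₙ`,
`P₁,…,Pₙ`, there is a unitary `U` such that whenever
`(O₁,…,Oₙ,Q) →_π (P₁,…,Pₙ,R)` it holds that `R = U(Q)`. -/
theorem uniformity (G : GateSet) {Γ : Env} {M : Term G} {A : QType}
    (d : Deriv G Γ M A) (n : ℕ) (O P : Fin n → Occ) :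
    ∃ U : Matrix (Fin n → Bool) (Fin n → Bool) ℂ,
      U ∈ Matrix.unitaryGroup (Fin n → Bool) ℂ ∧
      ∀ (Q R : Reg n), ‖Q‖ = 1 → Step G d ⟨n, O, Q⟩ ⟨n, P, R⟩ →
        R = (WithLp.toLp 2 (U.mulVec Q) : Reg n) := by
  classical
  by_cases hs : ∃ (p : List ℕ) (g : Fin G.card) (ι : Fin (G.arity g) → Fin n),
      GateAt G d p g ∧ Function.Injective ι ∧
      (∀ k, O (ι k) = (p, .goal, false :: tensPath (G.arity g) (k : ℕ))) ∧
      (∀ k, P (ι k) = (p, .goal, true :: tensPath (G.arity g) (k : ℕ))) ∧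
      (∀ j, (∀ k, ι k ≠ j) → P j = O j)
  · obtain ⟨p, g, ι, hg, hinj, harg, hres, hoth⟩ := hs
    refine ⟨liftMat G g ι, liftMat_mem_unitaryGroup G g ι hinj, ?_⟩
    intro Q R _ hstep
    rcases step_inv hstep with ⟨hRQ, i, o', he, hP⟩ |
      ⟨p', g', ι', hg', hinj', harg', hres', hoth', hR⟩
    · exfalso
      set k0 : Fin (G.arity g) := ⟨0, G.arity_pos g⟩ with hk0
      have hne : O (ι k0) ≠ P (ι k0) := by rw [harg, hres]; simp
      have hii : ι k0 = i := by
        by_contra hii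
        have hPO : P (ι k0) = O (ι k0) := by
          rw [hP]; exact Function.update_of_ne hii _ _
        exact hne hPO.symm
      have hOi : O i = (p, .goal, false :: tensPath (G.arity g) (k0 : ℕ)) :=
        hii ▸ harg k0
      have ho' : o' = (p, .goal, true :: tensPath (G.arity g) (k0 : ℕ)) := by
        have hPi : P i = o' := by rw [hP, Function.update_self]
        rw [← hPi, ← hii, hres k0]
      exact no_edge_at_gate hg _ _ he (by rw [hOi]) (by rw [ho'])
    · have hrange : ∀ k' : Fin (G.arity g'), ∃ k, ι k = ι' k' := by
        intro k'
        by_contra hc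
        push_neg at hc
        have h1 := hoth (ι' k') hc
        rw [harg' k', hres' k'] at h1
        simp at h1
      have hpp : p = p' := by
        obtain ⟨k1, hk1⟩ := hrange ⟨0, G.arity_pos g'⟩
        have h2 := harg k1
        rw [hk1, harg'] at h2
        exact (congrArg Prod.fst h2).symm
      subst hpp
      have hgg : g = g' := gateAt_unique hg _ hg'
      subst hgg
      have hii : ι = ι' := by
        funext k'
        obtain ⟨k, hk⟩ := hrange k'
        have e1 := harg k
        rw [hk, harg' k'] at e1
        have e2 : tensPath (G.arity g) (k' : ℕ) = tensPath (G.arity g) (k : ℕ) := by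
          simpa using e1
        have hkk : (k' : ℕ) = (k : ℕ) := tensPath_inj _ _ _ k'.isLt k.isLt e2
        rw [← hk]
        exact congrArg ι (Fin.ext hkk)
      rw [hR, hii]
  · refine ⟨1, one_mem _, ?_⟩
    intro Q R _ hstep
    rcases step_inv hstep with ⟨hRQ, _⟩ | ⟨p, g, ι, hg, hinj, harg, hres, hoth, _⟩
    · rw [hRQ]; exact (congrArg (WithLp.toLp 2) (Matrix.one_mulVec Q.ofLp)).symm
    · exact absurd ⟨p, g, ι, hg, hinj, harg, hres, hoth⟩ hs

end QL
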